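/- The quartic potential H(u₁,u₂,u₃) = (λ¹−λ²)u₁²u₂² + (λ²−λ³)u₂²u₃² + (λ³−λ¹)u₃²u₁² satisfies the diagonalizability conditions: J = 0, H₁₂₃ = 0, ∂₁((λ³−λ²)H₁₁ + R₂ + R₃) = 0, ∂₂((λ¹−λ³)H₂₂ + R₁ + R₃) = 0, ∂₃((λ²−λ¹)H₃₃ + R₁ + R₂) = 0, on the open set where u₁u₂u₃ ≠ 0 and all mixed partials H₁₂, H₁₃, H₂₃ are nonzero. -/

import Mathlib

noncomputable def d1 (H : ℝ → ℝ → ℝ → ℝ) : ℝ → ℝ → ℝ → ℝ :=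
  fun x y z => deriv (fun t => H t y z) x
noncomputable def d2 (H : ℝ → ℝ → ℝ → ℝ) : ℝ → ℝ → ℝ → ℝ :=
  fun x y z => deriv (fun t => H x t z) y
noncomputable def d3 (H : ℝ → ℝ → ℝ → ℝ) : ℝ → ℝ → ℝ → ℝ :=
  fun x y z => deriv (fun t => H x y t) z

/-- The quartic potential (5.12). -/
noncomputable def Hq (l1 l2 l3 : ℝ) : ℝ → ℝ → ℝ → ℝ :=
  fun u1 u2 u3 => (l1 - l2) * u1 ^ 2 * u2 ^ 2 + (l2 - l3) * u2 ^ 2 * u3 ^ 2 +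
    (l3 - l1) * u3 ^ 2 * u1 ^ 2

lemma deriv_sq_lin (A B x : ℝ) : deriv (fun t => A * t ^ 2 + B) x = 2 * A * x := by
  have h := ((hasDerivAt_pow 2 x).const_mul A).add_const B
  rw [h.deriv]; push_cast; ring

lemma deriv_lin (A B x : ℝ) : deriv (fun t => A * t + B) x = A := by
  have h := ((hasDerivAt_id x).const_mul A).add_const B
  simpa using h.deriv

lemma Hq_d1 (l1 l2 l3 : ℝ) :
    d1 (Hq l1 l2 l3) = fun x y z => 2 * (l1 - l2) * x * y ^ 2 + 2 * (l3 - l1) * z ^ 2 * x := by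
  funext x y z
  have h : (fun t => Hq l1 l2 l3 t y z)
      = fun t => ((l1 - l2) * y ^ 2 + (l3 - l1) * z ^ 2) * t ^ 2 + (l2 - l3) * y ^ 2 * z ^ 2 := by
    funext t; simp [Hq]; ring
  simp only [d1, h, deriv_sq_lin]; ring

lemma Hq_d2 (l1 l2 l3 : ℝ) :
    d2 (Hq l1 l2 l3) = fun x y z => 2 * (l1 - l2) * x ^ 2 * y + 2 * (l2 - l3) * y * z ^ 2 := by
  funext x y z
  have h : (fun t => Hq l1 l2 l3 x t z)
      = fun t => ((l1 - l2) * x ^ 2 + (l2 - l3) * z ^ 2) * t ^ 2 + (l3 - l1) * z ^ 2 * x ^ 2 := by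
    funext t; simp [Hq]; ring
  simp only [d2, h, deriv_sq_lin]; ring

lemma Hq_d3 (l1 l2 l3 : ℝ) :
    d3 (Hq l1 l2 l3) = fun x y z => 2 * (l2 - l3) * y ^ 2 * z + 2 * (l3 - l1) * z * x ^ 2 := by
  funext x y z
  have h : (fun t => Hq l1 l2 l3 x y t)
      = fun t => ((l2 - l3) * y ^ 2 + (l3 - l1) * x ^ 2) * t ^ 2 + (l1 - l2) * x ^ 2 * y ^ 2 := by
    funext t; simp [Hq]; ring
  simp only [d3, h, deriv_sq_lin]; ring

lemma Hq_d11 (l1 l2 l3 : ℝ) :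
    d1 (d1 (Hq l1 l2 l3)) = fun _ y z => 2 * (l1 - l2) * y ^ 2 + 2 * (l3 - l1) * z ^ 2 := by
  funext x y z
  have h : (fun t => d1 (Hq l1 l2 l3) t y z)
      = fun t => (2 * (l1 - l2) * y ^ 2 + 2 * (l3 - l1) * z ^ 2) * t + 0 := by
    funext t; simp [Hq_d1]; ring
  show deriv (fun t => d1 (Hq l1 l2 l3) t y z) x = _
  rw [h, deriv_lin]

lemma Hq_d12 (l1 l2 l3 : ℝ) :
    d2 (d1 (Hq l1 l2 l3)) = fun x y _ => 4 * (l1 - l2) * x * y := by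
  funext x y z
  have h : (fun t => d1 (Hq l1 l2 l3) x t z)
      = fun t => (2 * (l1 - l2) * x) * t ^ 2 + 2 * (l3 - l1) * z ^ 2 * x := by
    funext t; simp [Hq_d1]
  simp only [d2, h, deriv_sq_lin]; ring

lemma Hq_d13 (l1 l2 l3 : ℝ) :
    d3 (d1 (Hq l1 l2 l3)) = fun x _ z => 4 * (l3 - l1) * z * x := by
  funext x y z
  have h : (fun t => d1 (Hq l1 l2 l3) x y t)
      = fun t => (2 * (l3 - l1) * x) * t ^ 2 + 2 * (l1 - l2) * x * y ^ 2 := by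
    funext t; simp [Hq_d1]; ring
  show deriv (fun t => d1 (Hq l1 l2 l3) x y t) z = _
  rw [h, deriv_sq_lin]; ring

lemma Hq_d22 (l1 l2 l3 : ℝ) :
    d2 (d2 (Hq l1 l2 l3)) = fun x _ z => 2 * (l1 - l2) * x ^ 2 + 2 * (l2 - l3) * z ^ 2 := by
  funext x y z
  have h : (fun t => d2 (Hq l1 l2 l3) x t z)
      = fun t => (2 * (l1 - l2) * x ^ 2 + 2 * (l2 - l3) * z ^ 2) * t + 0 := by
    funext t; simp [Hq_d2]; ring
  show deriv (fun t => d2 (Hq l1 l2 l3) x t z) y = _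
  rw [h, deriv_lin]

lemma Hq_d23 (l1 l2 l3 : ℝ) :
    d3 (d2 (Hq l1 l2 l3)) = fun _ y z => 4 * (l2 - l3) * y * z := by
  funext x y z
  have h : (fun t => d2 (Hq l1 l2 l3) x y t)
      = fun t => (2 * (l2 - l3) * y) * t ^ 2 + 2 * (l1 - l2) * x ^ 2 * y := by
    funext t; simp [Hq_d2]; ring
  show deriv (fun t => d2 (Hq l1 l2 l3) x y t) z = _
  rw [h, deriv_sq_lin]; ring

lemma Hq_d33 (l1 l2 l3 : ℝ) :
    d3 (d3 (Hq l1 l2 l3)) = fun x y _ => 2 * (l2 - l3) * y ^ 2 + 2 * (l3 - l1) * x ^ 2 := by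
  funext x y z
  have h : (fun t => d3 (Hq l1 l2 l3) x y t)
      = fun t => (2 * (l2 - l3) * y ^ 2 + 2 * (l3 - l1) * x ^ 2) * t + 0 := by
    funext t; simp [Hq_d3]; ring
  show deriv (fun t => d3 (Hq l1 l2 l3) x y t) z = _
  rw [h, deriv_lin]

lemma Hq_d123 (l1 l2 l3 : ℝ) :
    d3 (d2 (d1 (Hq l1 l2 l3))) = fun _ _ _ => 0 := by
  funext x y z
  have h : (fun t => d2 (d1 (Hq l1 l2 l3)) x y t) = fun _ => 4 * (l1 - l2) * x * y := by
    funext t; simp [Hq_d12]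
  show deriv (fun t => d2 (d1 (Hq l1 l2 l3)) x y t) z = _
  rw [h, deriv_const]

theorem stmt15 (l1 l2 l3 : ℝ) (hl12 : l1 ≠ l2) (hl13 : l1 ≠ l3) (hl23 : l2 ≠ l3)
    (u1 u2 u3 : ℝ) (hu : u1 * u2 * u3 ≠ 0)
    (h12 : d2 (d1 (Hq l1 l2 l3)) u1 u2 u3 ≠ 0)
    (h13 : d3 (d1 (Hq l1 l2 l3)) u1 u2 u3 ≠ 0)
    (h23 : d3 (d2 (Hq l1 l2 l3)) u1 u2 u3 ≠ 0) :
    let H := Hq l1 l2 l3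
    -- J = 0
    ((l2 - l3) * (d2 (d1 H) u1 u2 u3) ^ 2 * (d3 (d1 H) u1 u2 u3) ^ 2 +
      (l3 - l1) * (d3 (d2 H) u1 u2 u3) ^ 2 * (d2 (d1 H) u1 u2 u3) ^ 2 +
      (l1 - l2) * (d3 (d1 H) u1 u2 u3) ^ 2 * (d3 (d2 H) u1 u2 u3) ^ 2 -
      d2 (d1 H) u1 u2 u3 * d3 (d2 H) u1 u2 u3 * d3 (d1 H) u1 u2 u3 *
        ((l2 - l3) * d1 (d1 H) u1 u2 u3 + (l3 - l1) * d2 (d2 H) u1 u2 u3 +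
          (l1 - l2) * d3 (d3 H) u1 u2 u3) = 0) ∧
    -- H₁₂₃ = 0
    d3 (d2 (d1 H)) u1 u2 u3 = 0 ∧
    -- ∂₁((λ³−λ²)H₁₁ + R₂ + R₃) = 0
    deriv (fun x => (l3 - l2) * d1 (d1 H) x u2 u3 +
      (d2 (d1 H) x u2 u3 * d3 (d2 H) x u2 u3 / d3 (d1 H) x u2 u3) * (l3 - l1) +
      (d3 (d1 H) x u2 u3 * d3 (d2 H) x u2 u3 / d2 (d1 H) x u2 u3) * (l1 - l2)) u1 = 0 ∧
    -- ∂₂((λ¹−λ³)H₂₂ + R₁ + R₃) = 0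
    deriv (fun y => (l1 - l3) * d2 (d2 H) u1 y u3 +
      (d2 (d1 H) u1 y u3 * d3 (d1 H) u1 y u3 / d3 (d2 H) u1 y u3) * (l2 - l3) +
      (d3 (d1 H) u1 y u3 * d3 (d2 H) u1 y u3 / d2 (d1 H) u1 y u3) * (l1 - l2)) u2 = 0 ∧
    -- ∂₃((λ²−λ¹)H₃₃ + R₁ + R₂) = 0
    deriv (fun z => (l2 - l1) * d3 (d3 H) u1 u2 z +
      (d2 (d1 H) u1 u2 z * d3 (d1 H) u1 u2 z / d3 (d2 H) u1 u2 z) * (l2 - l3) +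
      (d2 (d1 H) u1 u2 z * d3 (d2 H) u1 u2 z / d3 (d1 H) u1 u2 z) * (l3 - l1)) u3 = 0 := by
  intro H
  have hH : H = Hq l1 l2 l3 := rfl
  have hu1 : u1 ≠ 0 := fun h => hu (by simp [h])
  have hu2 : u2 ≠ 0 := fun h => hu (by simp [h])
  have hu3 : u3 ≠ 0 := fun h => hu (by simp [h])
  have ha : l1 - l2 ≠ 0 := sub_ne_zero.mpr hl12
  have hb : l2 - l3 ≠ 0 := sub_ne_zero.mpr hl23
  have hc : l3 - l1 ≠ 0 := sub_ne_zero.mpr (Ne.symm hl13)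
  refine ⟨?_, ?_, ?_, ?_, ?_⟩
  · simp only [hH, Hq_d11, Hq_d12, Hq_d13, Hq_d22, Hq_d23, Hq_d33]
    ring
  · simp [hH, Hq_d123]
  · have heq : (fun x => (l3 - l2) * d1 (d1 H) x u2 u3 +
        (d2 (d1 H) x u2 u3 * d3 (d2 H) x u2 u3 / d3 (d1 H) x u2 u3) * (l3 - l1) +
        (d3 (d1 H) x u2 u3 * d3 (d2 H) x u2 u3 / d2 (d1 H) x u2 u3) * (l1 - l2))
        =ᶠ[nhds u1] (fun _ => (l3 - l2) * d1 (d1 H) u1 u2 u3 +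
        (d2 (d1 H) u1 u2 u3 * d3 (d2 H) u1 u2 u3 / d3 (d1 H) u1 u2 u3) * (l3 - l1) +
        (d3 (d1 H) u1 u2 u3 * d3 (d2 H) u1 u2 u3 / d2 (d1 H) u1 u2 u3) * (l1 - l2)) := by
      filter_upwards [eventually_ne_nhds hu1] with x hx
      simp only [hH, Hq_d11, Hq_d12, Hq_d13, Hq_d23]
      field_simp
    rw [heq.deriv_eq, deriv_const]
  · have heq : (fun y => (l1 - l3) * d2 (d2 H) u1 y u3 +
        (d2 (d1 H) u1 y u3 * d3 (d1 H) u1 y u3 / d3 (d2 H) u1 y u3) * (l2 - l3) +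
        (d3 (d1 H) u1 y u3 * d3 (d2 H) u1 y u3 / d2 (d1 H) u1 y u3) * (l1 - l2))
        =ᶠ[nhds u2] (fun _ => (l1 - l3) * d2 (d2 H) u1 u2 u3 +
        (d2 (d1 H) u1 u2 u3 * d3 (d1 H) u1 u2 u3 / d3 (d2 H) u1 u2 u3) * (l2 - l3) +
        (d3 (d1 H) u1 u2 u3 * d3 (d2 H) u1 u2 u3 / d2 (d1 H) u1 u2 u3) * (l1 - l2)) := by
      filter_upwards [eventually_ne_nhds hu2] with y hy
      simp only [hH, Hq_d22, Hq_d12, Hq_d13, Hq_d23]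
      field_simp
    rw [heq.deriv_eq, deriv_const]
  · have heq : (fun z => (l2 - l1) * d3 (d3 H) u1 u2 z +
        (d2 (d1 H) u1 u2 z * d3 (d1 H) u1 u2 z / d3 (d2 H) u1 u2 z) * (l2 - l3) +
        (d2 (d1 H) u1 u2 z * d3 (d2 H) u1 u2 z / d3 (d1 H) u1 u2 z) * (l3 - l1))
        =ᶠ[nhds u3] (fun _ => (l2 - l1) * d3 (d3 H) u1 u2 u3 +
        (d2 (d1 H) u1 u2 u3 * d3 (d1 H) u1 u2 u3 / d3 (d2 H) u1 u2 u3) * (l2 - l3) +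
        (d2 (d1 H) u1 u2 u3 * d3 (d2 H) u1 u2 u3 / d3 (d1 H) u1 u2 u3) * (l3 - l1)) := by
      filter_upwards [eventually_ne_nhds hu3] with z hz
      simp only [hH, Hq_d33, Hq_d12, Hq_d13, Hq_d23]
      field_simp
    rw [heq.deriv_eq, deriv_const]
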